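/- Suppose a (2I)×J matrix Ŵ factors as Ŵ = M B where M is the (2I)×(3(K+1)) block matrix with 2×3 blocks M^i in the first block column and α_k^i M^i in the remaining block columns, and B stacks matrices B₀, B₁, …, B_K (each 3×J) with rank(B₀) ≤ 3 and rank(B_k) = 1 for k ≥ 1. Then rank(Ŵ) ≤ K + 3. -/

import Mathlib

open Matrix BigOperators

lemma matrix_rank_add_le {m n : Type*} [Fintype m] [Fintype n]
    (A B : Matrix m n ℝ) : (A + B).rank ≤ A.rank + B.rank := by
  rw [Matrix.rank, Matrix.rank, Matrix.rank, Matrix.mulVecLin_add]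
  calc Module.finrank ℝ (LinearMap.range (A.mulVecLin + B.mulVecLin))
      ≤ Module.finrank ℝ ↑(LinearMap.range A.mulVecLin ⊔ LinearMap.range B.mulVecLin) :=
        Submodule.finrank_mono (by
          rintro x ⟨v, rfl⟩
          exact Submodule.mem_sup.2 ⟨A.mulVecLin v, ⟨v, rfl⟩, B.mulVecLin v, ⟨v, rfl⟩, rfl⟩)
    _ ≤ _ := Submodule.finrank_add_le_finrank_add_finrank _ _

lemma rank_finset_sum_le {m n ι : Type*} [Fintype m] [Fintype n] [DecidableEq ι]
    (s : Finset ι) (f : ι → Matrix m n ℝ) :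
    (∑ i ∈ s, f i).rank ≤ ∑ i ∈ s, (f i).rank := by
  classical
  induction s using Finset.induction with
  | empty => simp [Matrix.rank_zero]
  | insert _ _ h ih =>
      rw [Finset.sum_insert h, Finset.sum_insert h]
      exact le_trans (matrix_rank_add_le _ _) (by omega)

/-- If the noise-free measurement matrix factors as `Ŵ = M B` with the rank-one
basis-shapes structure — `M` has block rows `(Mⁱ, α₁ⁱ Mⁱ, …, α_Kⁱ Mⁱ)` and `B`
stacks `B₀, B₁, …, B_K` with `rank B₀ ≤ 3` and `rank B_k = 1` for `k ≥ 1` — then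
`rank Ŵ ≤ K + 3`.  Rows of `Ŵ` are indexed by `Fin I × Fin 2`, the inner index of
the factorisation by `Fin (K+1) × Fin 3`, and block `0` is the rigid shape
(`α i 0 = 1`). -/
theorem rank_one_shapes_rank_bound (I J K : ℕ)
    (W : Matrix (Fin I × Fin 2) (Fin J) ℝ)
    (Mi : Fin I → Matrix (Fin 2) (Fin 3) ℝ)
    (α : Fin I → Fin (K + 1) → ℝ)
    (Bk : Fin (K + 1) → Matrix (Fin 3) (Fin J) ℝ)
    (hα0 : ∀ i, α i 0 = 1)
    (hB0 : (Bk 0).rank ≤ 3)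
    (hBk : ∀ k : Fin (K + 1), k ≠ 0 → (Bk k).rank = 1)
    (hW : W = (Matrix.of fun ir kc => α ir.1 kc.1 * Mi ir.1 ir.2 kc.2 :
                Matrix (Fin I × Fin 2) (Fin (K + 1) × Fin 3) ℝ)
              * (Matrix.of fun kc j => Bk kc.1 kc.2 j :
                Matrix (Fin (K + 1) × Fin 3) (Fin J) ℝ)) :
    W.rank ≤ K + 3 := by
  classical
  set Ak : Fin (K + 1) → Matrix (Fin I × Fin 2) (Fin 3) ℝ :=
    fun k => Matrix.of fun ir c => α ir.1 k * Mi ir.1 ir.2 c with hAk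
  have hWsum : W = ∑ k : Fin (K + 1), (Ak k) * (Bk k) := by
    rw [hW]
    ext ir j
    simp only [Matrix.mul_apply, Matrix.of_apply, Matrix.sum_apply,
      Fintype.sum_prod_type, hAk]
  rw [hWsum]
  calc (∑ k : Fin (K + 1), (Ak k) * (Bk k)).rank
      ≤ ∑ k : Fin (K + 1), ((Ak k) * (Bk k)).rank :=
        rank_finset_sum_le _ _
    _ ≤ ∑ k : Fin (K + 1), (Bk k).rank := by
        exact Finset.sum_le_sum fun k _ => Matrix.rank_mul_le_right _ _
    _ ≤ K + 3 := by
        rw [Fin.sum_univ_succ]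
        have h1 : ∀ k : Fin K, (Bk k.succ).rank = 1 := fun k =>
          hBk k.succ (Fin.succ_ne_zero k)
        simp only [h1, Finset.sum_const, Finset.card_univ, Fintype.card_fin,
          smul_eq_mul, mul_one]
        omega
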